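/- arXiv:2410.20492 — 4 statements merged into one kernel-verified Lean document; each statement's English description precedes it below -/
import Mathlib

section
/- Let λ/μ be a skew shape. The skew Ferrers graph G_{λ/μ} is connected if and only if μ_{i−1} ≤ λ_i − 1 for all 2 ≤ i ≤ n. -/
open CategoryTheory CategoryTheory.Limits MvPolynomial

noncomputable section

namespace SkewTab

/-! ### Partitions and skew shapes (0-indexed) -/

/-- `lam` is a partition with exactly `n` positive parts (0-indexed),
extended by `0` beyond index `n - 1`. -/
def IsPartitionFn (n : ℕ) (lam : ℕ → ℕ) : Prop :=
  0 < n ∧ Antitone lam ∧ (∀ i, i < n → 0 < lam i) ∧ ∀ i, n ≤ i → lam i = 0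

/-- `λ/μ` is a skew shape with `n` rows (0-indexed): `λ_i > μ_i ≥ 0` and `μ_n = 0`. -/
def IsSkewShape (n : ℕ) (lam mu : ℕ → ℕ) : Prop :=
  0 < n ∧ Antitone lam ∧ Antitone mu ∧ (∀ i, i < n → mu i < lam i) ∧
    (∀ i, n ≤ i → lam i = 0) ∧ mu (n - 1) = 0

/-- The conjugate partition: `conj lam j = #{i : lam i > j}` (0-indexed). -/
def conj (lam : ℕ → ℕ) (j : ℕ) : ℕ := Nat.card {i | j < lam i}

/-- The set of boxes of the skew diagram `λ/μ` (0-indexed `(row, column)` pairs). -/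
def skewDiagram (lam mu : ℕ → ℕ) : Set (ℕ × ℕ) :=
  {p | mu p.1 ≤ p.2 ∧ p.2 < lam p.1}

/-- The set of boxes of the Ferrers diagram of a partition. -/
def ferrers (nu : ℕ → ℕ) : Set (ℕ × ℕ) := {p | p.2 < nu p.1}

/-- The block of the Ferrers diagram of `nu` containing the box `p`:  blocks are the
rectangular regions cut out by the horizontal lines at the values of the conjugate
partition and the vertical lines at the values of the partition. -/
def blockOf (nu : ℕ → ℕ) (p : ℕ × ℕ) : Set (ℕ × ℕ) :=
  {q | q.2 < nu q.1 ∧ nu q.1 = nu p.1 ∧ conj nu q.2 = conj nu p.2}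

/-- A box `(i,j)` of the diagram of `nu` lies in a *corner block* iff its block has no
block to its right nor below it. -/
def InCornerBlock (nu : ℕ → ℕ) (i j : ℕ) : Prop :=
  j < nu i ∧ conj nu (nu i - 1) = conj nu j ∧ nu (conj nu j - 1) = nu i

/-- A partition is unmixed iff all its corner blocks are square
(height of the block = width of the block). -/
def IsUnmixedPartition (nu : ℕ → ℕ) : Prop :=
  (∃ n, IsPartitionFn n nu) ∧
    ∀ i j, InCornerBlock nu i j →
      conj nu (nu i - 1) - conj nu (nu i) = nu (conj nu j - 1) - nu (conj nu j)

/-- A partition all of whose corner blocks are single boxes (1 × 1):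
the condition defining prime Cohen-Macaulay shapes. -/
def IsCMPartition (nu : ℕ → ℕ) : Prop :=
  (∃ n, IsPartitionFn n nu) ∧
    ∀ i j, InCornerBlock nu i j →
      conj nu (nu i - 1) - conj nu (nu i) = 1 ∧ nu (conj nu j - 1) - nu (conj nu j) = 1

/-- A copy of (the diagram of) a partition `nu` placed in the plane.  If `upper = true`
it is placed rotated by 180° and anchored at the bottom-right position `(row, col)`
(an upper triangular shape, hugging the top-right); if `upper = false` it is placed as is,
translated by `(row, col)` (a lower triangular shape, hugging the bottom-left). -/
structure PlacedShape where
  nu : ℕ → ℕ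
  row : ℕ
  col : ℕ
  upper : Bool

/-- The embedding of the abstract diagram of `B.nu` into the plane. -/
def PlacedShape.emb (B : PlacedShape) : ℕ × ℕ → ℕ × ℕ := fun p =>
  if B.upper then (B.row - p.1, B.col - p.2) else (B.row + p.1, B.col + p.2)

/-- The set of boxes of a placed shape. -/
def PlacedShape.boxes (B : PlacedShape) : Set (ℕ × ℕ) := B.emb '' ferrers B.nu

/-- For an upper triangular placed shape the anchor must leave room for the whole
(rotated) diagram. -/
def PlacedShape.Valid (B : PlacedShape) : Prop :=
  B.upper = true → conj B.nu 0 ≤ B.row + 1 ∧ B.nu 0 ≤ B.col + 1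

/-- The two extremal blocks (top-right and bottom-left corner blocks) of a placed
shape, as subsets of the plane. -/
def PlacedShape.extremalBlocks (B : PlacedShape) : Set (Set (ℕ × ℕ)) :=
  {B.emb '' blockOf B.nu (0, B.nu 0 - 1), B.emb '' blockOf B.nu (conj B.nu 0 - 1, 0)}

/-- `D` decomposes as a union of prime shapes `B 0, …, B (t-1)` (each a placed copy of a
partition satisfying `P`), consecutive shapes being of alternating (upper/lower) type and
intersecting exactly in a common extremal block. -/
def IsPrimeDecomposition (P : (ℕ → ℕ) → Prop) (D : Set (ℕ × ℕ)) (t : ℕ)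
    (B : ℕ → PlacedShape) : Prop :=
  0 < t ∧ (∀ k, k < t → P (B k).nu ∧ (B k).Valid) ∧
    (⋃ k ∈ Set.Iio t, (B k).boxes) = D ∧
    (∀ k, k + 1 < t → (B k).upper ≠ (B (k + 1)).upper) ∧
    ∀ k, k + 1 < t →
      (B k).boxes ∩ (B (k + 1)).boxes ∈ (B k).extremalBlocks ∧
      (B k).boxes ∩ (B (k + 1)).boxes ∈ (B (k + 1)).extremalBlocks

/-- The filling `w` is weakly increasing along both rows and columns on the boxes of `S`. -/
def WeaklyIncreasingOn (w : ℕ → ℕ → ℕ) (S : Set (ℕ × ℕ)) : Prop :=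
  (∀ i j, (i, j) ∈ S → (i, j + 1) ∈ S → w i j ≤ w i (j + 1)) ∧
    ∀ i j, (i, j) ∈ S → (i + 1, j) ∈ S → w i j ≤ w (i + 1) j

/-- The filling `w` is weakly decreasing along both rows and columns on the boxes of `S`. -/
def WeaklyDecreasingOn (w : ℕ → ℕ → ℕ) (S : Set (ℕ × ℕ)) : Prop :=
  (∀ i j, (i, j) ∈ S → (i, j + 1) ∈ S → w i (j + 1) ≤ w i j) ∧
    ∀ i j, (i, j) ∈ S → (i + 1, j) ∈ S → w (i + 1) j ≤ w i j

/-! ### Ideals and graphs attached to skew shapes -/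

/-- The skew Ferrers ideal `I_{λ/μ}` in `k[x_1,…,x_n,y_1,…,y_m]`, `m = λ_1`. -/
def skewIdeal (k : Type) [Field k] (n : ℕ) (lam mu : ℕ → ℕ) :
    Ideal (MvPolynomial (Fin n ⊕ Fin (lam 0)) k) :=
  Ideal.span {q | ∃ (i : Fin n) (j : Fin (lam 0)),
    mu (i : ℕ) ≤ (j : ℕ) ∧ (j : ℕ) < lam (i : ℕ) ∧ q = X (Sum.inl i) * X (Sum.inr j)}

/-- The skew tableau ideal `I(Y)` of the filling `w` of the skew shape `λ/μ`. -/
def tableauIdeal (k : Type) [Field k] (n : ℕ) (lam mu : ℕ → ℕ) (w : ℕ → ℕ → ℕ) :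
    Ideal (MvPolynomial (Fin n ⊕ Fin (lam 0)) k) :=
  Ideal.span {q | ∃ (i : Fin n) (j : Fin (lam 0)),
    mu (i : ℕ) ≤ (j : ℕ) ∧ (j : ℕ) < lam (i : ℕ) ∧
      q = (X (Sum.inl i) * X (Sum.inr j)) ^ w (i : ℕ) (j : ℕ)}

/-- The skew tableau ideal of the skew tableau obtained from `Y` by keeping only the rows
in `Rs` and the columns in `Cs`. -/
def tableauIdealRC (k : Type) [Field k] (n m : ℕ) (lam mu : ℕ → ℕ) (w : ℕ → ℕ → ℕ)
    (Rs : Set (Fin n)) (Cs : Set (Fin m)) : Ideal (MvPolynomial (↥Rs ⊕ ↥Cs) k) :=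
  Ideal.span {q | ∃ (i : ↥Rs) (j : ↥Cs),
    mu (i.1 : ℕ) ≤ (j.1 : ℕ) ∧ (j.1 : ℕ) < lam (i.1 : ℕ) ∧
      q = (X (Sum.inl i) * X (Sum.inr j)) ^ w (i.1 : ℕ) (j.1 : ℕ)}

/-- The skew Ferrers graph `G_{λ/μ}`, a bipartite graph on `{x_1,…,x_n} ⊔ {y_1,…,y_m}`. -/
def skewGraph (n : ℕ) (lam mu : ℕ → ℕ) : SimpleGraph (Fin n ⊕ Fin (lam 0)) :=
  SimpleGraph.fromRel fun a b => ∃ (i : Fin n) (j : Fin (lam 0)),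
    mu (i : ℕ) ≤ (j : ℕ) ∧ (j : ℕ) < lam (i : ℕ) ∧ a = Sum.inl i ∧ b = Sum.inr j

/-- The edge ideal of a simple graph. -/
def edgeIdeal (k : Type) [Field k] {V : Type} (G : SimpleGraph V) :
    Ideal (MvPolynomial V k) :=
  Ideal.span {q | ∃ u v, G.Adj u v ∧ q = X u * X v}

/-- The edge ideal of an edge-weighted simple graph. -/
def edgeIdealW (k : Type) [Field k] {V : Type} (G : SimpleGraph V) (w : V → V → ℕ) :
    Ideal (MvPolynomial V k) :=
  Ideal.span {q | ∃ u v, G.Adj u v ∧ q = (X u * X v) ^ w u v}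

/-! ### Homological notions -/

/-- The homogeneous maximal ideal of a polynomial ring. -/
def maxIdeal (k : Type) [Field k] (σ : Type) : Ideal (MvPolynomial σ k) :=
  Ideal.span (Set.range (X : σ → MvPolynomial σ k))

/-- The `i`-th local cohomology of the `R`-module `M` supported at the ideal `J`. -/
def localCoh {R : Type} [CommRing R] (J : Ideal R) (i : ℕ) (M : Type) [AddCommGroup M]
    [Module R M] : ModuleCat R :=
  (localCohomology J i).obj (ModuleCat.of R M)

/-- The Krull dimension of a module, `dim (R / ann M)`. -/
def moduleDim (R : Type) [CommRing R] (M : Type) [AddCommGroup M] [Module R M] :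
    WithBot ℕ∞ :=
  ringKrullDim (R ⧸ Module.annihilator R M)

/-- A module `M` is Cohen-Macaulay (w.r.t. the maximal ideal `J`) if
`H^i_J(M) = 0` for all `i < dim M`. -/
def IsCMModule {R : Type} [CommRing R] (J : Ideal R) (M : Type) [AddCommGroup M]
    [Module R M] : Prop :=
  ∀ i : ℕ, (i : WithBot ℕ∞) < moduleDim R M → IsZero (localCoh J i M)

/-- An ideal `I` is Cohen-Macaulay if `H^i_J(R/I) = 0` for all `i < dim R/I`
(`J` the maximal ideal). -/
def IsCMIdeal {R : Type} [CommRing R] (J I : Ideal R) : Prop :=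
  ∀ i : ℕ, (i : WithBot ℕ∞) < ringKrullDim (R ⧸ I) → IsZero (localCoh J i (R ⧸ I))

/-- An ideal `I` is generalized Cohen-Macaulay if `H^i_J(R/I)` has finite length for
all `i < dim R/I`. -/
def IsGCMIdeal {R : Type} [CommRing R] (J I : Ideal R) : Prop :=
  ∀ i : ℕ, (i : WithBot ℕ∞) < ringKrullDim (R ⧸ I) → IsFiniteLength R (localCoh J i (R ⧸ I))

/-- The canonical map `Ext^i(R/J, M) → H^i_J(M)`, i.e. the structure map of the colimit
defining local cohomology, at the first power of `J`. -/
def extToLocalCoh {R : Type} [CommRing R] (J : Ideal R) (i : ℕ) (M : ModuleCat R) :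
    ((localCohomology.diagram (localCohomology.idealPowersDiagram J) i).obj
        (Opposite.op (Opposite.op (1 : ℕ)))).obj M ⟶ (localCohomology J i).obj M :=
  have := localCohomology.hasColimitDiagram (localCohomology.idealPowersDiagram J) i
  (colimit.ι (localCohomology.diagram (localCohomology.idealPowersDiagram J) i)
    (Opposite.op (Opposite.op (1 : ℕ)))).app M

/-- An ideal `I` is Buchsbaum if the canonical map `Ext^i(R/J, R/I) → H^i_J(R/I)` is
surjective for all `i < dim R/I` (`J` the maximal ideal). -/
def IsBuchsbaumIdeal {R : Type} [CommRing R] (J I : Ideal R) : Prop :=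
  ∀ i : ℕ, (i : WithBot ℕ∞) < ringKrullDim (R ⧸ I) →
    Function.Surjective (extToLocalCoh J i (ModuleCat.of R (R ⧸ I)))

/-- An ideal `I` is unmixed if `dim R/P = dim R/I` for all associated primes `P` of `R/I`. -/
def IsUnmixedIdeal {R : Type} [CommRing R] (I : Ideal R) : Prop :=
  ∀ P ∈ associatedPrimes R (R ⧸ I), ringKrullDim (R ⧸ P) = ringKrullDim (R ⧸ I)

/-- A submodule of `S/J` (`S` a polynomial ring) is graded if it is the image of a
homogeneous ideal of `S`. -/
def IsGradedSubmodule (k σ : Type) [Field k] (J : Ideal (MvPolynomial σ k))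
    (N : Submodule (MvPolynomial σ k) (MvPolynomial σ k ⧸ J)) : Prop :=
  letI := MvPolynomial.gradedAlgebra (σ := σ) (R := k)
  ∃ K : Ideal (MvPolynomial σ k), Ideal.IsHomogeneous (homogeneousSubmodule σ k) K ∧
    ∀ x, x ∈ N ↔ x ∈ K.map (Ideal.Quotient.mk J)

/-- A (homogeneous) ideal `J` of a polynomial ring `S` is sequentially Cohen-Macaulay if
`S/J` admits a filtration `0 = M_0 ⊂ M_1 ⊂ ⋯ ⊂ M_r = S/J` by graded submodules such that
every quotient `M_{i+1}/M_i` is Cohen-Macaulay and the dimensions of the quotients are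
strictly increasing. -/
def IsSCMIdeal (k σ : Type) [Field k] (J : Ideal (MvPolynomial σ k)) : Prop :=
  ∃ (r : ℕ) (M : ℕ → Submodule (MvPolynomial σ k) (MvPolynomial σ k ⧸ J)),
    M 0 = ⊥ ∧ M r = ⊤ ∧ (∀ i, i < r → M i < M (i + 1)) ∧
    (∀ i, i ≤ r → IsGradedSubmodule k σ J (M i)) ∧
    (∀ i, i < r → IsCMModule (maxIdeal k σ)
      (↥(M (i + 1)) ⧸ Submodule.comap (M (i + 1)).subtype (M i))) ∧
    ∀ i, i + 2 ≤ r →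
      moduleDim (MvPolynomial σ k)
          (↥(M (i + 1)) ⧸ Submodule.comap (M (i + 1)).subtype (M i)) <
        moduleDim (MvPolynomial σ k)
          (↥(M (i + 2)) ⧸ Submodule.comap (M (i + 2)).subtype (M (i + 1)))

/-- A graph is sequentially Cohen-Macaulay if its edge ideal is. -/
def IsSCMGraph (k : Type) [Field k] {V : Type} (G : SimpleGraph V) : Prop :=
  IsSCMIdeal k V (edgeIdeal k G)

/-! ### Monomial ideals -/

/-- A monomial of a polynomial ring. -/
def IsMonomial {k σ : Type} [Field k] (u : MvPolynomial σ k) : Prop :=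
  ∃ d : σ →₀ ℕ, u = monomial d 1

/-- A monomial ideal of a polynomial ring. -/
def IsMonomialIdeal {k σ : Type} [Field k] (I : Ideal (MvPolynomial σ k)) : Prop :=
  ∃ T : Set (σ →₀ ℕ), I = Ideal.span ((fun d => (monomial d (1 : k) : MvPolynomial σ k)) '' T)

/-! ### Saturated partitions -/

/-- A partition is saturated if it is either strictly decreasing, or
`{λ_i, λ_i - 1, …, 1} ⊆ {λ_1, …, λ_n}` where `i` is the smallest index with
`λ_i = λ_{i+1}` (0-indexed here). -/
def IsSaturated (n : ℕ) (lam : ℕ → ℕ) : Prop :=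
  StrictAntiOn lam (Set.Iio n) ∨
    ∃ i, i + 1 < n ∧ lam i = lam (i + 1) ∧ (∀ j, j < i → lam j ≠ lam (j + 1)) ∧
      ∀ v, 0 < v → v ≤ lam i → ∃ a, a < n ∧ lam a = v

/-! ### Vertex decomposability -/

/-- A set `T` of vertices is independent in `G`. -/
def IsIndepSet {V : Type} (G : SimpleGraph V) (T : Finset V) : Prop :=
  ∀ u ∈ T, ∀ v ∈ T, ¬G.Adj u v

open Classical in
/-- The induced subgraph of `G` on a finite vertex set `A` is vertex decomposable:
either it has no edges, or it has a shredding vertex `v`, i.e. a vertex such that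
`G \ v` and `G \ N[v]` are vertex decomposable and no independent set of `G \ N[v]`
is a maximal independent set of `G \ v`. -/
def IsVertexDecomposable {V : Type} (G : SimpleGraph V) : Finset V → Prop := fun A =>
  (∀ u ∈ A, ∀ v ∈ A, ¬G.Adj u v) ∨
    ∃ v, ∃ _ : v ∈ A,
      IsVertexDecomposable G (A.erase v) ∧
      IsVertexDecomposable G (A.filter fun u => u ≠ v ∧ ¬G.Adj v u) ∧
      ∀ T ⊆ A.filter fun u => u ≠ v ∧ ¬G.Adj v u, IsIndepSet G T →
        ¬(T ⊆ A.erase v ∧ IsIndepSet G T ∧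
            ∀ u ∈ A.erase v, u ∉ T → ∃ t ∈ T, G.Adj u t)
termination_by A => A.card
decreasing_by
  · exact Finset.card_erase_lt_of_mem ‹_›
  · exact Finset.card_lt_card (Finset.filter_ssubset.mpr ⟨v, ‹_›, by simp⟩)


/-- The skew Ferrers graph `G_{λ/μ}` is connected iff
`μ_{i-1} ≤ λ_i - 1` for all `2 ≤ i ≤ n` (stated here 0-indexed: for all `1 ≤ i < n`). -/
theorem stmt_5 (n : ℕ) (lam mu : ℕ → ℕ) (hshape : IsSkewShape n lam mu) :
    (skewGraph n lam mu).Connected ↔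
      ∀ i, 1 ≤ i → i < n → mu (i - 1) ≤ lam i - 1 := by
  obtain ⟨hn, hlam, hmu, hlt, hzero, hmun⟩ := hshape
  have hlam0 : 0 < lam 0 := lt_of_le_of_lt (Nat.zero_le _) (hlt 0 hn)
  have hadj : ∀ (i : Fin n) (j : Fin (lam 0)), mu (i : ℕ) ≤ (j : ℕ) → (j : ℕ) < lam (i : ℕ) →
      (skewGraph n lam mu).Adj (Sum.inl i) (Sum.inr j) := by
    intro i j h1 h2
    rw [skewGraph, SimpleGraph.fromRel_adj]
    exact ⟨by simp, Or.inl ⟨i, j, h1, h2, rfl, rfl⟩⟩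
  constructor
  · intro hconn i hi1 hin
    by_contra hcon
    push_neg at hcon
    have hlami : 0 < lam i := lt_of_le_of_lt (Nat.zero_le _) (hlt i hin)
    have hle : lam i ≤ mu (i - 1) := by omega
    set f : Fin n ⊕ Fin (lam 0) → Bool := fun v => match v with
      | Sum.inl i' => decide ((i' : ℕ) < i)
      | Sum.inr j => decide (mu (i - 1) ≤ (j : ℕ)) with hf
    have core : ∀ (a : Fin n) (b : Fin (lam 0)), mu (a : ℕ) ≤ (b : ℕ) → (b : ℕ) < lam (a : ℕ) →
        ((a : ℕ) < i ↔ mu (i - 1) ≤ (b : ℕ)) := by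
      intro a b h1 h2
      constructor
      · intro h
        exact le_trans (hmu (show (a : ℕ) ≤ i - 1 by omega)) h1
      · intro h
        by_contra hc
        push_neg at hc
        have h3 : lam (a : ℕ) ≤ lam i := hlam hc
        omega
    have hedge : ∀ u v, (skewGraph n lam mu).Adj u v → f u = f v := by
      intro u v huv
      rw [skewGraph, SimpleGraph.fromRel_adj] at huv
      obtain ⟨hne, h | h⟩ := huv
      · obtain ⟨a, b, h1, h2, rfl, rfl⟩ := h
        simp only [hf]
        rw [decide_eq_decide]
        exact core a b h1 h2
      · obtain ⟨a, b, h1, h2, rfl, rfl⟩ := h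
        simp only [hf]
        rw [decide_eq_decide]
        exact (core a b h1 h2).symm
    have hreach : ∀ u v, (skewGraph n lam mu).Reachable u v → f u = f v := by
      intro u v h
      obtain ⟨w⟩ := h
      induction w with
      | nil => rfl
      | cons h _ ih => exact (hedge _ _ h).trans ih
    have h1 := hreach (Sum.inl (⟨0, hn⟩ : Fin n)) (Sum.inl (⟨i, hin⟩ : Fin n)) (hconn _ _)
    simp only [hf, decide_eq_decide] at h1
    omega
  · intro hcond
    rw [SimpleGraph.connected_iff]
    refine ⟨?_, ⟨Sum.inl ⟨0, hn⟩⟩⟩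
    have hx : ∀ k (hk : k < n),
        (skewGraph n lam mu).Reachable (Sum.inl ⟨k, hk⟩) (Sum.inl (⟨0, hn⟩ : Fin n)) := by
      intro k
      induction k with
      | zero => intro hk; exact SimpleGraph.Reachable.refl _
      | succ m ih =>
        intro hk
        have hm : m < n := by omega
        have hmuam : mu m < lam (m + 1) := by
          have h1 := hcond (m + 1) (by omega) hk
          have h2 := hlt (m + 1) hk
          simp only [Nat.add_sub_cancel] at h1
          omega
        have hjlt : mu m < lam 0 := lt_of_lt_of_le hmuam (hlam (Nat.zero_le _))
        have a1 : (skewGraph n lam mu).Adj (Sum.inl (⟨m + 1, hk⟩ : Fin n))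
            (Sum.inr (⟨mu m, hjlt⟩ : Fin (lam 0))) :=
          hadj _ _ (hmu (by omega : m ≤ m + 1)) hmuam
        have a2 : (skewGraph n lam mu).Adj (Sum.inl (⟨m, hm⟩ : Fin n))
            (Sum.inr (⟨mu m, hjlt⟩ : Fin (lam 0))) :=
          hadj _ _ le_rfl (hlt m hm)
        exact (a1.reachable.trans a2.reachable.symm).trans (ih hm)
    have hx' : ∀ i : Fin n,
        (skewGraph n lam mu).Reachable (Sum.inl i) (Sum.inl (⟨0, hn⟩ : Fin n)) := by
      intro i
      have := hx i.val i.isLt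
      simpa using this
    have hy : ∀ j : Fin (lam 0), ∃ i : Fin n, mu (i : ℕ) ≤ (j : ℕ) ∧ (j : ℕ) < lam (i : ℕ) := by
      intro j
      classical
      obtain ⟨i0, hile, hP, hmax⟩ :
          ∃ i0, i0 ≤ n - 1 ∧ (j : ℕ) < lam i0 ∧ (i0 < n - 1 → lam (i0 + 1) ≤ (j : ℕ)) := by
        refine ⟨Nat.findGreatest (fun i => (j : ℕ) < lam i) (n - 1),
          Nat.findGreatest_le _,
          Nat.findGreatest_spec (P := fun i => (j : ℕ) < lam i) (n := n - 1) (m := 0)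
            (Nat.zero_le _) j.isLt, ?_⟩
        intro hlt'
        have h := Nat.findGreatest_is_greatest (P := fun i => (j : ℕ) < lam i) (n := n - 1)
          (k := Nat.findGreatest (fun i => (j : ℕ) < lam i) (n - 1) + 1)
          (Nat.lt_succ_self _) (by omega)
        simp only [not_lt] at h
        exact h
      have hi0n : i0 < n := by omega
      have hmu0 : mu i0 ≤ (j : ℕ) := by
        rcases eq_or_lt_of_le hile with he | hl
        · rw [he, hmun]; exact Nat.zero_le _
        · have hng := hmax hl
          have h1 := hcond (i0 + 1) (by omega) (by omega)
          simp only [Nat.add_sub_cancel] at h1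
          omega
      exact ⟨⟨i0, hi0n⟩, hmu0, hP⟩
    have to0 : ∀ u, (skewGraph n lam mu).Reachable u (Sum.inl (⟨0, hn⟩ : Fin n)) := by
      intro u
      cases u with
      | inl i => exact hx' i
      | inr j =>
        obtain ⟨i, h1, h2⟩ := hy j
        exact ((hadj i j h1 h2).symm.reachable).trans (hx' i)
    intro u v
    exact (to0 u).trans (to0 v).symm

end SkewTab
end
end

section
/- Let I be a monomial ideal in a polynomial ring S, let J = √(I : u) be an associated radical of I (u a monomial not in I), and let K = J : v be an associated radical of J (v a monomial not in J). Then K is an associated radical of I, i.e., there exists a monomial w ∉ I with K = √(I : w). -/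
open CategoryTheory CategoryTheory.Limits MvPolynomial

noncomputable section

namespace SkewTab

/-- Let `I` be a monomial ideal, `J = √(I : u)` an associated radical of
`I` (`u` a monomial not in `I`), and `K = J : v` an associated radical of `J` (`v` a
monomial not in `J`).  Then `K` is an associated radical of `I`: there is a monomial
`w ∉ I` with `K = √(I : w)`. -/
theorem stmt_6 (k σ : Type) [Field k] [Fintype σ] (I : Ideal (MvPolynomial σ k))
    (hI : IsMonomialIdeal I) (u : MvPolynomial σ k) (hu : IsMonomial u) (huI : u ∉ I)
    (v : MvPolynomial σ k) (hv : IsMonomial v)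
    (hvJ : v ∉ (Submodule.colon I (Ideal.span {u})).radical) :
    ∃ w : MvPolynomial σ k, IsMonomial w ∧ w ∉ I ∧
      Submodule.colon ((Submodule.colon I (Ideal.span {u})).radical) (Ideal.span {v}) =
        (Submodule.colon I (Ideal.span {w})).radical := by
  classical
  obtain ⟨d, hd⟩ := hu
  obtain ⟨e, he⟩ := hv
  have hmono : Monotone fun n : ℕ =>
      Submodule.colon (Submodule.colon I (Ideal.span {u})) (Ideal.span {v ^ n}) := by
    intro a b hab y hy
    rw [Ideal.mem_colon_span_singleton] at hy ⊢
    have h : y * v ^ b = v ^ (b - a) * (y * v ^ a) := by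
      rw [mul_comm (v ^ (b - a)), mul_assoc, ← pow_add]
      congr 2
      omega
    rw [h]
    exact Ideal.mul_mem_left _ _ hy
  obtain ⟨N, hN⟩ := monotone_stabilizes_iff_noetherian.mpr inferInstance
    (⟨_, hmono⟩ : ℕ →o Ideal (MvPolynomial σ k))
  have hfN : Submodule.colon (Submodule.colon I (Ideal.span {u})) (Ideal.span {v ^ N})
      = Submodule.colon I (Ideal.span {u * v ^ N}) := by
    ext y
    rw [Ideal.mem_colon_span_singleton, Ideal.mem_colon_span_singleton, Ideal.mem_colon_span_singleton,
      show y * v ^ N * u = y * (u * v ^ N) by ring]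
  refine ⟨u * v ^ N, ⟨d + N • e, by
      rw [hd, he, monomial_pow, one_pow, monomial_mul, one_mul]⟩, ?_, ?_⟩
  · intro hmem
    apply hvJ
    exact ⟨N, by rwa [Ideal.mem_colon_span_singleton, mul_comm]⟩
  · ext x
    constructor
    · intro hx
      rw [Ideal.mem_colon_span_singleton] at hx
      obtain ⟨m, hm⟩ := hx
      have hxm : x ^ m ∈ Submodule.colon (Submodule.colon I (Ideal.span {u}))
          (Ideal.span {v ^ m}) := by
        rw [Ideal.mem_colon_span_singleton, ← mul_pow]
        exact hm
      have hxm' : x ^ m ∈ Submodule.colon (Submodule.colon I (Ideal.span {u}))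
          (Ideal.span {v ^ N}) := by
        have h1 := hmono (le_max_right N m) hxm
        have h2 := hN (max N m) (le_max_left N m)
        exact (congrArg (x ^ m ∈ ·) h2.symm).mp h1
      rw [hfN] at hxm'
      exact ⟨m, hxm'⟩
    · intro hx
      obtain ⟨m, hm⟩ := hx
      rw [← hfN, Ideal.mem_colon_span_singleton] at hm
      rw [Ideal.mem_colon_span_singleton]
      refine ⟨m + N, ?_⟩
      rw [show (x * v) ^ (m + N) = v ^ m * x ^ N * (x ^ m * v ^ N) by ring]
      exact Ideal.mul_mem_left _ _ hm


end SkewTab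
end
end

section
/- Let G = K_{U,V} be a complete bipartite graph where both parts U and V have at least 2 vertices. Then G is not vertex decomposable. -/
open CategoryTheory CategoryTheory.Limits MvPolynomial

noncomputable section

namespace SkewTab

/-- A complete bipartite graph `K_{U,V}` with both parts of size at
least `2` is not vertex decomposable. -/
theorem stmt_7 (α β : Type) [Fintype α] [Fintype β]
    (hα : 2 ≤ Fintype.card α) (hβ : 2 ≤ Fintype.card β) :
    ¬ IsVertexDecomposable (completeBipartiteGraph α β) Finset.univ := by

  intro h
  rw [IsVertexDecomposable] at h
  obtain ⟨a, a', haa'⟩ := Fintype.exists_pair_of_one_lt_card hα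
  obtain ⟨b, b', hbb'⟩ := Fintype.exists_pair_of_one_lt_card hβ
  classical
  rcases h with h | ⟨v, -, -, -, hcond⟩
  · exact h (Sum.inl a) (Finset.mem_univ _) (Sum.inr b) (Finset.mem_univ _) (by simp)
  cases v with
  | inl c =>
    refine hcond _ (Finset.Subset.refl _) ?_ ⟨?_, ?_, ?_⟩
    · intro u hu w hw
      simp only [Finset.mem_filter] at hu hw
      cases u with
      | inr y => exact (hu.2.2 (by simp)).elim
      | inl x =>
        cases w with
        | inr y => exact (hw.2.2 (by simp)).elim
        | inl x' => simp
    · intro u hu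
      simp only [Finset.mem_filter] at hu
      simp only [Finset.mem_erase, Finset.mem_univ, and_true]
      exact hu.2.1
    · intro u hu w hw
      simp only [Finset.mem_filter] at hu hw
      cases u with
      | inr y => exact (hu.2.2 (by simp)).elim
      | inl x =>
        cases w with
        | inr y => exact (hw.2.2 (by simp)).elim
        | inl x' => simp
    · intro u hu hunT
      simp only [Finset.mem_erase, Finset.mem_univ, and_true] at hu
      simp only [Finset.mem_filter, Finset.mem_univ, true_and] at hunT
      cases u with
      | inl x => exact (hunT ⟨hu, by simp⟩).elim
      | inr y =>
        obtain ⟨c', hc'⟩ : ∃ c' : α, c' ≠ c := by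
          by_cases hac : a = c
          · exact ⟨a', fun h' => haa' (hac.trans h'.symm)⟩
          · exact ⟨a, hac⟩
        refine ⟨Sum.inl c', ?_, by simp⟩
        simp only [Finset.mem_filter, Finset.mem_univ, true_and]
        exact ⟨by simpa using hc', by simp⟩
  | inr c =>
    refine hcond _ (Finset.Subset.refl _) ?_ ⟨?_, ?_, ?_⟩
    · intro u hu w hw
      simp only [Finset.mem_filter] at hu hw
      cases u with
      | inl y => exact (hu.2.2 (by simp)).elim
      | inr x =>
        cases w with
        | inl y => exact (hw.2.2 (by simp)).elim
        | inr x' => simp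
    · intro u hu
      simp only [Finset.mem_filter] at hu
      simp only [Finset.mem_erase, Finset.mem_univ, and_true]
      exact hu.2.1
    · intro u hu w hw
      simp only [Finset.mem_filter] at hu hw
      cases u with
      | inl y => exact (hu.2.2 (by simp)).elim
      | inr x =>
        cases w with
        | inl y => exact (hw.2.2 (by simp)).elim
        | inr x' => simp
    · intro u hu hunT
      simp only [Finset.mem_erase, Finset.mem_univ, and_true] at hu
      simp only [Finset.mem_filter, Finset.mem_univ, true_and] at hunT
      cases u with
      | inr x => exact (hunT ⟨hu, by simp⟩).elim
      | inl y =>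
        obtain ⟨c', hc'⟩ : ∃ c' : β, c' ≠ c := by
          by_cases hbc : b = c
          · exact ⟨b', fun h' => hbb' (hbc.trans h'.symm)⟩
          · exact ⟨b, hbc⟩
        refine ⟨Sum.inr c', ?_, by simp⟩
        simp only [Finset.mem_filter, Finset.mem_univ, true_and]
        exact ⟨by simpa using hc', by simp⟩

end SkewTab
end
end

section
/- Let λ be a partition and μ its conjugate partition. If λ is saturated, then μ is saturated. -/
open CategoryTheory CategoryTheory.Limits MvPolynomial

noncomputable section

namespace SkewTab

lemma conj_eq_ncard (lam : ℕ → ℕ) (j : ℕ) : conj lam j = {i | j < lam i}.ncard :=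
  Nat.card_coe_set_eq _

lemma conj_set_subset_Iio {n : ℕ} {lam : ℕ → ℕ} (h0 : ∀ i, n ≤ i → lam i = 0) (j : ℕ) :
    {i | j < lam i} ⊆ Set.Iio n := by
  intro i hi
  simp only [Set.mem_setOf_eq] at hi
  simp only [Set.mem_Iio]
  by_contra h
  push_neg at h
  rw [h0 i h] at hi
  omega

lemma conj_set_finite {n : ℕ} {lam : ℕ → ℕ} (h0 : ∀ i, n ≤ i → lam i = 0) (j : ℕ) :
    {i | j < lam i}.Finite :=
  (Set.finite_Iio n).subset (conj_set_subset_Iio h0 j)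

lemma conj_antitone {n : ℕ} {lam : ℕ → ℕ} (h0 : ∀ i, n ≤ i → lam i = 0) :
    Antitone (conj lam) := by
  intro a b hab
  rw [conj_eq_ncard, conj_eq_ncard]
  exact Set.ncard_le_ncard (fun i hi => lt_of_le_of_lt hab hi) (conj_set_finite h0 a)

lemma conj_zero_eq {n : ℕ} {lam : ℕ → ℕ} (hpart : IsPartitionFn n lam) :
    conj lam 0 = n := by
  obtain ⟨hn, hA, hpos, h0⟩ := hpart
  rw [conj_eq_ncard]
  have hset : {i | 0 < lam i} = Set.Iio n := by
    ext i
    simp only [Set.mem_setOf_eq, Set.mem_Iio]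
    constructor
    · intro h
      by_contra hc
      push_neg at hc
      rw [h0 i hc] at h
      omega
    · exact hpos i
  rw [hset, ← Finset.coe_range, Set.ncard_coe_finset, Finset.card_range]

/-- If `lam (v-1) > lam v` then the value `v` is attained by the conjugate. -/
lemma conj_attains {n : ℕ} {lam : ℕ → ℕ} (hpart : IsPartitionFn n lam) {v : ℕ}
    (hv1 : 0 < v) (hlt : lam v < lam (v - 1)) :
    ∃ a, a < lam 0 ∧ conj lam a = v := by
  obtain ⟨hn, hA, hpos, h0⟩ := hpart
  refine ⟨lam v, lt_of_lt_of_le hlt (hA (Nat.zero_le _)), ?_⟩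
  rw [conj_eq_ncard]
  have hset : {i | lam v < lam i} = Set.Iio v := by
    ext i
    simp only [Set.mem_setOf_eq, Set.mem_Iio]
    constructor
    · intro h
      by_contra hc
      push_neg at hc
      exact absurd (hA hc) (not_le.mpr h)
    · intro h
      have h1 : lam (v - 1) ≤ lam i := hA (by omega)
      omega
  rw [hset, ← Finset.coe_range, Set.ncard_coe_finset, Finset.card_range]

/-- If the conjugate repeats at `j`, no part of `lam` equals `j + 1`. -/
lemma no_val_of_conj_eq {n : ℕ} {lam : ℕ → ℕ} (h0 : ∀ i, n ≤ i → lam i = 0) {j : ℕ}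
    (h : conj lam j = conj lam (j + 1)) : ∀ i, lam i ≠ j + 1 := by
  intro i hi
  have hsub : {a | j + 1 < lam a} ⊆ {a | j < lam a} := fun a ha => by
    simp only [Set.mem_setOf_eq] at *; omega
  have hle : {a | j < lam a}.ncard ≤ {a | j + 1 < lam a}.ncard := by
    rw [← conj_eq_ncard, ← conj_eq_ncard, h]
  have heq := Set.eq_of_subset_of_ncard_le hsub hle (conj_set_finite h0 j)
  have hmem : i ∈ {a | j < lam a} := by simp only [Set.mem_setOf_eq]; omega
  rw [← heq] at hmem
  simp only [Set.mem_setOf_eq] at hmem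
  omega

/-- If a partition `λ` is saturated, then so is its conjugate. -/
theorem stmt_8 (n : ℕ) (lam : ℕ → ℕ) (hpart : IsPartitionFn n lam)
    (hsat : IsSaturated n lam) : IsSaturated (lam 0) (conj lam) := by
  obtain ⟨hn, hA, hpos, h0⟩ := hpart
  have hpart' : IsPartitionFn n lam := ⟨hn, hA, hpos, h0⟩
  have hcA : Antitone (conj lam) := conj_antitone h0
  have hm : 0 < lam 0 := hpos 0 hn
  by_cases hstrict : StrictAntiOn (conj lam) (Set.Iio (lam 0))
  · exact Or.inl hstrict
  · right
    have hex : ∃ j, j + 1 < lam 0 ∧ conj lam j = conj lam (j + 1) := by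
      by_contra hc
      push_neg at hc
      apply hstrict
      intro a ha b hb hab
      simp only [Set.mem_Iio] at ha hb
      have h1 : conj lam (a + 1) < conj lam a := by
        have hne := hc a (by omega)
        have h2 : conj lam (a + 1) ≤ conj lam a := hcA (by omega)
        omega
      have h2 : conj lam b ≤ conj lam (a + 1) := hcA (by omega)
      omega
    classical
    set i' := Nat.find hex with hi'def
    obtain ⟨hi'm, hi'eq⟩ := Nat.find_spec hex
    have hi'min : ∀ j, j < i' → ¬(j + 1 < lam 0 ∧ conj lam j = conj lam (j + 1)) :=
      fun j hj => Nat.find_min hex hj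
    refine ⟨i', hi'm, hi'eq, ?_, ?_⟩
    · intro j hj hje
      exact hi'min j hj ⟨by omega, hje⟩
    · -- attainment of all values 1..conj lam i'
      intro v hv0 hvle
      rcases hsat with hstr | ⟨i, hin, hieq, hineq, hatt⟩
      · -- λ strictly decreasing: all values 1..n attained by conj
        have hvn : v ≤ n := by
          have : conj lam i' ≤ conj lam 0 := hcA (Nat.zero_le _)
          rw [conj_zero_eq hpart'] at this
          omega
        apply conj_attains hpart' hv0
        rcases eq_or_lt_of_le hvn with rfl | hvn'
        · have := hpos (v - 1) (by omega)
          have := h0 v le_rfl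
          omega
        · exact hstr (by simp only [Set.mem_Iio]; omega)
            (by simp only [Set.mem_Iio]; omega) (by omega)
      · -- λ has first repeat at i with all values 1..lam i attained
        have hnoval := no_val_of_conj_eq h0 hi'eq
        -- i' ≥ lam i
        have hge : lam i ≤ i' := by
          by_contra hc
          push_neg at hc
          obtain ⟨a, _, ha⟩ := hatt (i' + 1) (by omega) (by omega)
          exact hnoval a ha
        -- conj lam i' ≤ i
        have hci : conj lam i' ≤ i := by
          rw [conj_eq_ncard]
          have hsub : {a | i' < lam a} ⊆ Set.Iio i := by
            intro a ha
            simp only [Set.mem_setOf_eq] at ha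
            simp only [Set.mem_Iio]
            by_contra hc
            push_neg at hc
            have := hA hc
            omega
          calc {a | i' < lam a}.ncard ≤ (Set.Iio i).ncard :=
                Set.ncard_le_ncard hsub (Set.finite_Iio i)
            _ = i := by
                rw [← Finset.coe_range, Set.ncard_coe_finset, Finset.card_range]
        apply conj_attains hpart' hv0
        have hvi : v ≤ i := le_trans hvle hci
        have hne := hineq (v - 1) (by omega)
        have hle : lam v ≤ lam (v - 1) := hA (by omega)
        have : v - 1 + 1 = v := by omega
        rw [this] at hne
        omega

end SkewTab
end
end
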